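/- Let Γ be a simplicial complex on [n] and 1 ≤ i < j ≤ n. If the Stanley–Reisner ideal I_Γ has no minimal monomial generator divisible by x_i x_j, then in(φ_{ij}(I_Γ)) = I_{Shift_{ij}(Γ)}, where in(−) denotes the initial ideal with respect to the degree reverse lexicographic order induced by x_1 > ⋯ > x_n. -/

import Mathlib

/-! Combinatorics of simplicial complexes on subsets of ℕ (vertex set `[n] = Finset.Icc 1 n`). -/

/-- `Γ` is a simplicial complex on the vertex set `V`. -/
def SimplicialComplexOn (V : Finset ℕ) (Γ : Set (Finset ℕ)) : Prop :=
  (∀ F ∈ Γ, F ⊆ V) ∧ (∀ v ∈ V, ({v} : Finset ℕ) ∈ Γ) ∧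
    (∀ F ∈ Γ, ∀ G, G ⊆ F → G ∈ Γ)

/-- The dimension of a simplicial complex, as an integer (`dim Γ = max {|F| - 1 : F ∈ Γ}`). -/
noncomputable def sdim (Γ : Set (Finset ℕ)) : ℤ :=
  sSup ((fun F : Finset ℕ => (F.card : ℤ) - 1) '' Γ)

/-- A facet of `Γ` is a maximal face. -/
def IsFacet (Γ : Set (Finset ℕ)) (F : Finset ℕ) : Prop :=
  F ∈ Γ ∧ ∀ G ∈ Γ, F ⊆ G → F = G

/-- A complex is pure if all of its facets have the same cardinality. -/
def PureComplex (Γ : Set (Finset ℕ)) : Prop :=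
  ∀ F G, IsFacet Γ F → IsFacet Γ G → F.card = G.card

/-- `fvec Γ k` is the number of faces of `Γ` of cardinality `k`, i.e. `f_{k-1}(Γ)`. -/
noncomputable def fvec (Γ : Set (Finset ℕ)) (k : ℕ) : ℕ :=
  {F ∈ Γ | F.card = k}.ncard

/-- The `h`-vector of a `(d-1)`-dimensional complex:
`h_i = ∑_{j=0}^i (-1)^{i-j} binom(d-j, d-i) f_{j-1}`. -/
noncomputable def hvec (d : ℕ) (Γ : Set (Finset ℕ)) (i : ℕ) : ℤ :=
  ∑ j ∈ Finset.range (i + 1),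
    (-1 : ℤ) ^ (i - j) * (Nat.choose (d - j) (d - i) : ℤ) * (fvec Γ j : ℤ)

/-- The link of `Γ` with respect to a face `F`. -/
def linkOf (Γ : Set (Finset ℕ)) (F : Finset ℕ) : Set (Finset ℕ) :=
  {G | Disjoint G F ∧ G ∪ F ∈ Γ}

/-- The contraction of `Γ` with respect to `{i,j}`, identifying vertex `i` with `j`. -/
def contraction (Γ : Set (Finset ℕ)) (i j : ℕ) : Set (Finset ℕ) :=
  {F | F ∈ Γ ∧ i ∉ F} ∪ {G | ∃ F ∈ Γ, i ∈ F ∧ G = F.erase i ∪ {j}}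

/-- The Link condition: `lk_Γ({i}) ∩ lk_Γ({j}) = lk_Γ({i,j})`. -/
def LinkCondition (Γ : Set (Finset ℕ)) (i j : ℕ) : Prop :=
  linkOf Γ {i} ∩ linkOf Γ {j} = linkOf Γ {i, j}

open Classical in
/-- The shift operator `C_{ij}` on faces. -/
noncomputable def shiftMap (Γ : Set (Finset ℕ)) (i j : ℕ) (F : Finset ℕ) : Finset ℕ :=
  if i ∈ F ∧ j ∉ F ∧ F.erase i ∪ {j} ∉ Γ then F.erase i ∪ {j} else F

/-- `Shift_{ij}(Γ) = {C_{ij}(F) : F ∈ Γ}`. -/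
noncomputable def shiftComplex (Γ : Set (Finset ℕ)) (i j : ℕ) : Set (Finset ℕ) :=
  (shiftMap Γ i j) '' Γ

/-- The join `W * Σ = {F ∪ G : F ⊆ W, G ∈ Σ}` of a vertex set with a complex. -/
def joinW (W : Finset ℕ) (C : Set (Finset ℕ)) : Set (Finset ℕ) :=
  {H | ∃ F ⊆ W, ∃ G ∈ C, H = F ∪ G}

/-- Strong edge decomposability: boundaries of simplices and `{∅}` are strongly edge
decomposable, and recursively, a pure complex satisfying the Link condition w.r.t. an edge
`{i,j}` whose contraction and link are strongly edge decomposable is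
strongly edge decomposable. -/
inductive StronglyEdgeDecomposable : Set (Finset ℕ) → Prop
  | trivialComplex : StronglyEdgeDecomposable {(∅ : Finset ℕ)}
  | simplexBoundary (V : Finset ℕ) (hV : V.Nonempty) :
      StronglyEdgeDecomposable {F | F ⊆ V ∧ F ≠ V}
  | contract (Γ : Set (Finset ℕ)) (i j : ℕ) (hij : i < j)
      (hpure : PureComplex Γ) (hedge : ({i, j} : Finset ℕ) ∈ Γ)
      (hlc : LinkCondition Γ i j)
      (hcon : StronglyEdgeDecomposable (contraction Γ i j))
      (hlk : StronglyEdgeDecomposable (linkOf Γ {i, j})) :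
      StronglyEdgeDecomposable Γ

/-- A shifted complex: `F ∈ Γ`, `i ∈ F`, `i < j`, `j ∈ V` imply `(F \ {i}) ∪ {j} ∈ Γ`. -/
def ShiftedComplex (V : Finset ℕ) (Γ : Set (Finset ℕ)) : Prop :=
  ∀ F ∈ Γ, ∀ i ∈ F, ∀ j, i < j → j ∈ V → insert j (F.erase i) ∈ Γ

/-- A `d`-subset `F ⊆ [n]` is admissible if `n - k ∉ F` implies `[n-d+k, n-k-1] ⊆ F`. -/
def Admissible (n d : ℕ) (F : Finset ℕ) : Prop :=
  F ⊆ Finset.Icc 1 n ∧ F.card = d ∧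
    ∀ k < n, (n - k) ∉ F → Finset.Icc (n - d + k) (n - k - 1) ⊆ F

/-- `Δ(n,d)`, the complex generated by all admissible `d`-subsets of `[n]`; by a theorem of
Kalai this is the symmetric algebraic shifted complex `Δˢ(C(n,d))` of the boundary complex of
the cyclic `d`-polytope with `n` vertices. -/
def DeltaC (n d : ℕ) : Set (Finset ℕ) :=
  if d = 0 then {(∅ : Finset ℕ)} else {G | ∃ F, Admissible n d F ∧ G ⊆ F}

/-- The increasing enumeration of `V`, as a map `{1, …, |V|} → V ⊆ ℕ` (identity elsewhere). -/
noncomputable def vlabel (V : Finset ℕ) (i : ℕ) : ℕ :=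
  if h : i - 1 < V.card then (((V.orderIsoOfFin rfl) ⟨i - 1, h⟩ : V) : ℕ) else i

/-- `Δ(V,d)`: the complex `Δ(|V|,d)` relabeled order-isomorphically onto the vertex set `V`. -/
noncomputable def DeltaV (V : Finset ℕ) (d : ℕ) : Set (Finset ℕ) :=
  (fun G : Finset ℕ => G.image (vlabel V)) '' DeltaC V.card d
/-! Squeezed balls and spheres (Kalai). Monomials on `[m]` are represented as multisets. -/

/-- `U` is a shifted order ideal of monomials on `[m]`: it contains `1` and all variables
`x_1,…,x_m`, is closed under divisibility, and `u·x_i ∈ U`, `i < j ≤ m` imply `u·x_j ∈ U`.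
(A monomial is encoded as the multiset of its variable indices.) -/
def IsShiftedOrderIdeal (m : ℕ) (U : Set (Multiset ℕ)) : Prop :=
  (∀ u ∈ U, ∀ i ∈ u, i ∈ Finset.Icc 1 m) ∧ (0 : Multiset ℕ) ∈ U ∧
    (∀ i ∈ Finset.Icc 1 m, ({i} : Multiset ℕ) ∈ U) ∧
    (∀ u ∈ U, ∀ v, v ≤ u → v ∈ U) ∧
    (∀ u : Multiset ℕ, ∀ i j : ℕ, i < j → j ≤ m → (i ::ₘ u) ∈ U → (j ::ₘ u) ∈ U)

/-- For a monomial `u = x_{i_1}⋯x_{i_k}` (`i_1 ≤ … ≤ i_k`), the `(d+1)`-set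
`F_d(u) = {i_1, i_1+1} ∪ {i_2+2, i_2+3} ∪ ⋯ ∪ {i_k+2(k-1), i_k+2k-1} ∪ [n+2k-d, n]`. -/
noncomputable def Fd (n d : ℕ) (u : Multiset ℕ) : Finset ℕ :=
  (Finset.range (Multiset.card u)).biUnion
      (fun j => {(u.sort (· ≤ ·)).getD j 0 + 2 * j, (u.sort (· ≤ ·)).getD j 0 + 2 * j + 1}) ∪
    Finset.Icc (n + 2 * Multiset.card u - d) n

/-- The squeezed `d`-ball `B_d(U)`: the complex generated by `{F_d(u) : u ∈ U}`. -/
def squeezedBall (n d : ℕ) (U : Set (Multiset ℕ)) : Set (Finset ℕ) :=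
  {G | ∃ u ∈ U, G ⊆ Fd n d u}

/-- The boundary of a pure `d`-dimensional complex `B`: the subcomplex generated by the
`(d-1)`-dimensional faces (cardinality-`d` faces) contained in exactly one facet. -/
noncomputable def complexBoundary (d : ℕ) (B : Set (Finset ℕ)) : Set (Finset ℕ) :=
  {F | ∃ G, F ⊆ G ∧ G ∈ B ∧ G.card = d ∧
    {H | H ∈ B ∧ H.card = d + 1 ∧ G ⊆ H}.ncard = 1}

/-- The squeezed `(d-1)`-sphere `S_d(U) = ∂ B_d(U)`. -/
noncomputable def squeezedSphere (n d : ℕ) (U : Set (Multiset ℕ)) : Set (Finset ℕ) :=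
  complexBoundary d (squeezedBall n d U)

/-! The Stanley–Reisner ideal, the degree reverse lexicographic order, initial ideals and
generic initial ideals in the polynomial ring `K[x_1,…,x_n]`, realized as
`MvPolynomial (Fin n) K` with the variable `x_i` being `X ⟨i-1⟩`. -/

/-- The squarefree monomial `x_F = ∏_{i ∈ F} x_i` (variable `x_i`, `1 ≤ i ≤ n`, is `X ⟨i-1⟩`). -/
noncomputable def faceMonomial (K : Type*) [CommRing K] (n : ℕ) (F : Finset ℕ) :
    MvPolynomial (Fin n) K :=
  ∏ a ∈ Finset.univ.filter (fun a : Fin n => (a : ℕ) + 1 ∈ F), MvPolynomial.X a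

/-- The Stanley–Reisner ideal of a complex `Γ` on `[n]`, generated by the squarefree
monomials `x_F` with `F ⊆ [n]`, `F ∉ Γ`. -/
noncomputable def srIdeal (K : Type*) [CommRing K] (n : ℕ) (Γ : Set (Finset ℕ)) :
    Ideal (MvPolynomial (Fin n) K) :=
  Ideal.span {f | ∃ F : Finset ℕ, F ⊆ Finset.Icc 1 n ∧ F ∉ Γ ∧ f = faceMonomial K n F}

/-- The degree reverse lexicographic order (induced by `x_1 > x_2 > ⋯`, smaller index =
bigger variable): `u < v` iff `deg u < deg v`, or degrees agree and at the largest index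
where `u, v` differ, `u` has the larger exponent. -/
def DegRevLexLT {σ : Type*} [LinearOrder σ] (u v : σ →₀ ℕ) : Prop :=
  (u.sum fun _ e => e) < (v.sum fun _ e => e) ∨
    ((u.sum fun _ e => e) = (v.sum fun _ e => e) ∧
      ∃ k, v k < u k ∧ ∀ l, k < l → u l = v l)

/-- The initial ideal of `I` w.r.t. the degree reverse lexicographic order: the ideal
spanned by the leading monomials of the elements of `I`. -/
noncomputable def initialIdeal {σ : Type*} [LinearOrder σ] {K : Type*} [Field K]
    (I : Ideal (MvPolynomial σ K)) : Ideal (MvPolynomial σ K) :=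
  Ideal.span {m | ∃ f ∈ I, ∃ u ∈ f.support, m = MvPolynomial.monomial u (1 : K) ∧
    ∀ v ∈ f.support, v ≠ u → DegRevLexLT v u}

/-- The linear change of coordinates of `K[x_1,…,x_n]` associated with a matrix `M`,
`x_j ↦ ∑_i M_{ij} x_i`. -/
noncomputable def genLin {K : Type*} [CommRing K] {n : ℕ} (M : Matrix (Fin n) (Fin n) K) :
    MvPolynomial (Fin n) K →ₐ[K] MvPolynomial (Fin n) K :=
  MvPolynomial.aeval (fun j => ∑ a : Fin n, MvPolynomial.C (M a j) * MvPolynomial.X a)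

/-- `J` is the generic initial ideal (w.r.t. degrevlex) of `I`: there is a nonempty Zariski
open subset `U ⊆ GL_n(K)` (the nonvanishing locus of a nonzero polynomial in the matrix
entries) such that `in(φ(I)) = J` for every `φ ∈ U`. -/
def IsGin {K : Type*} [Field K] {n : ℕ} (I J : Ideal (MvPolynomial (Fin n) K)) : Prop :=
  ∃ p : MvPolynomial (Fin n × Fin n) K, p ≠ 0 ∧
    ∀ M : Matrix (Fin n) (Fin n) K, IsUnit M.det →
      MvPolynomial.eval (fun q => M q.1 q.2) p ≠ 0 →
      initialIdeal (Ideal.map (genLin M) I) = J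

/-- The set `G(J)` of (exponent vectors of) minimal monomial generators of a monomial
ideal `J`. -/
def minimalMonomialGens {σ : Type*} {K : Type*} [Field K] (J : Ideal (MvPolynomial σ K)) :
    Set (σ →₀ ℕ) :=
  {u | MvPolynomial.monomial u (1 : K) ∈ J ∧
    ∀ v : σ →₀ ℕ, v ≤ u → MvPolynomial.monomial v (1 : K) ∈ J → v = u}

/-- The squarefree operation `Φ` on exponent vectors:
`x_{i_1} x_{i_2} ⋯ x_{i_k} ↦ {i_1, i_2+1, …, i_k+k-1}` (`i_1 ≤ i_2 ≤ ⋯ ≤ i_k`). -/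
noncomputable def sqfreeOp {n : ℕ} (u : Fin n →₀ ℕ) : Finset ℕ :=
  (List.zipWith (· + ·)
      ((u.toMultiset.map (fun a : Fin n => (a : ℕ) + 1)).sort (· ≤ ·))
      (List.range (Multiset.card (u.toMultiset)))).toFinset

/-- `Δs` is the symmetric algebraic shifted complex of `Γ`: its Stanley–Reisner ideal is
`Φ(Gin(I_Γ))`, i.e. `Δs` consists of the `F ⊆ [n]` containing no `Φ(u)`, `u ∈ G(Gin(I_Γ))`. -/
def IsSymmetricShift (K : Type*) [Field K] (n : ℕ) (Γ Δs : Set (Finset ℕ)) : Prop :=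
  ∃ J : Ideal (MvPolynomial (Fin n) K), IsGin (srIdeal K n Γ) J ∧
    Δs = {F | F ⊆ Finset.Icc 1 n ∧ ∀ u ∈ minimalMonomialGens J, ¬ sqfreeOp u ⊆ F}

/-- The exponent vector (in `K[x_1,…,x_n]`) of a monomial given as a multiset. -/
noncomputable def multisetToExp (n : ℕ) (u : Multiset ℕ) : Fin n →₀ ℕ :=
  Finsupp.equivFunOnFinite.symm (fun a : Fin n => u.count ((a : ℕ) + 1))
/-! The exterior algebra `E = ⋀⟨e_1, e_2, …⟩` over `K`, exterior face ideals, the reverse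
lexicographic order, initial ideals and exterior algebraic shifting. We realize `E` as the
exterior algebra of the `K`-module `ℕ → K`, with `e_i` the image of `Pi.single i 1`. -/

/-- The exterior algebra `⋀ (ℕ → K)` hosting all the exterior face ideals. -/
abbrev ExtAlg (K : Type*) [Field K] := ExteriorAlgebra K (ℕ → K)

/-- The exterior monomial `e_F = e_{i_1} ∧ ⋯ ∧ e_{i_k}` for `F = {i_1 < ⋯ < i_k}`. -/
noncomputable def eMon (K : Type*) [Field K] (F : Finset ℕ) : ExtAlg K :=
  ((F.sort (· ≤ ·)).map (fun i => ExteriorAlgebra.ι K (Pi.single i (1 : K)))).prod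

/-- The exterior face ideal `J_Γ` of a complex `Γ` on the vertex set `V`, generated by the
monomials `e_F` with `F ⊆ V`, `F ∉ Γ`. -/
noncomputable def extFaceIdeal (K : Type*) [Field K] (V : Finset ℕ) (Γ : Set (Finset ℕ)) :
    Ideal (ExtAlg K) :=
  Ideal.span {x | ∃ F : Finset ℕ, F ⊆ V ∧ F ∉ Γ ∧ x = eMon K F}

/-- The alternating form computing the determinant of the coordinates indexed by `F`. -/
noncomputable def detCoeffAlt (K : Type*) [Field K] (F : Finset ℕ) :
    (ℕ → K) [⋀^Fin F.card]→ₗ[K] K :=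
  (Matrix.detRowAlternating).compLinearMap
    (LinearMap.funLeft K K (fun b : Fin F.card => ((F.orderIsoOfFin rfl b : F) : ℕ)))

/-- The coefficient functional of the basis monomial `e_F`: the linear functional on the
exterior algebra giving the coefficient of `e_F` in the monomial basis expansion. -/
noncomputable def extCoeff (K : Type*) [Field K] (F : Finset ℕ) : ExtAlg K →ₗ[K] K :=
  ExteriorAlgebra.liftAlternating
    (fun i => if h : i = F.card then (detCoeffAlt K F).domDomCongr (finCongr h.symm) else 0)

/-- The reverse lexicographic order (induced by `1 > 2 > ⋯`) on exterior monomials: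
`F < G` iff `|F| < |G|`, or the cardinalities agree and the largest element of the
symmetric difference `F Δ G` belongs to `F`. -/
def RevLexLT (F G : Finset ℕ) : Prop :=
  F.card < G.card ∨ (F.card = G.card ∧
    ∃ k, k ∈ F ∧ k ∉ G ∧ ∀ l, k < l → (l ∈ F ↔ l ∈ G))

/-- The initial ideal of an ideal `I` of the exterior algebra w.r.t. the reverse
lexicographic order: spanned by the leading monomials `e_F` of the elements of `I`. -/
noncomputable def extInitialIdeal (K : Type*) [Field K] (I : Ideal (ExtAlg K)) :
    Ideal (ExtAlg K) :=
  Ideal.span {x | ∃ y ∈ I, ∃ F : Finset ℕ, x = eMon K F ∧ extCoeff K F y ≠ 0 ∧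
    ∀ G : Finset ℕ, extCoeff K G y ≠ 0 → G ≠ F → RevLexLT G F}

/-- The linear change of coordinates of `span{e_i : i ∈ V}` (identity elsewhere)
associated with a `|V| × |V|` matrix `M`. -/
noncomputable def extLinMap (K : Type*) [Field K] (V : Finset ℕ)
    (M : Matrix (Fin V.card) (Fin V.card) K) : (ℕ → K) →ₗ[K] (ℕ → K) where
  toFun v k :=
    if h : k ∈ V then
      ∑ a : Fin V.card,
        M ((V.orderIsoOfFin rfl).symm ⟨k, h⟩) a * v ((V.orderIsoOfFin rfl a : V) : ℕ)
    else v k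
  map_add' x y := by
    funext k
    by_cases h : k ∈ V <;> simp [h, mul_add, Finset.sum_add_distrib]
  map_smul' c x := by
    funext k
    by_cases h : k ∈ V <;> simp [h, Finset.mul_sum, mul_left_comm]

/-- The algebra automorphism of the exterior algebra induced by `extLinMap`. -/
noncomputable def extAlgMap (K : Type*) [Field K] (V : Finset ℕ)
    (M : Matrix (Fin V.card) (Fin V.card) K) : ExtAlg K →ₐ[K] ExtAlg K :=
  ExteriorAlgebra.lift K ⟨(ExteriorAlgebra.ι K).comp (extLinMap K V M),
    fun _ => ExteriorAlgebra.ι_sq_zero _⟩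

/-- `Δe` is the exterior algebraic shifted complex of `Γ` (as complexes on the vertex set
`V`): `J_{Δe} = Gin(J_Γ)`, where the generic initial ideal is witnessed by a nonempty
Zariski open subset of `GL(V)` (the nonvanishing locus of a nonzero polynomial in the
matrix entries). -/
def IsExteriorShift (K : Type*) [Field K] (V : Finset ℕ) (Γ Δe : Set (Finset ℕ)) : Prop :=
  ∃ p : MvPolynomial (Fin V.card × Fin V.card) K, p ≠ 0 ∧
    ∀ M : Matrix (Fin V.card) (Fin V.card) K, IsUnit M.det →
      MvPolynomial.eval (fun q => M q.1 q.2) p ≠ 0 →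
      extInitialIdeal K (Ideal.map (extAlgMap K V M) (extFaceIdeal K V Γ)) =
        extFaceIdeal K V Δe

/-- The simplicial complex on `V` whose exterior face ideal is the (monomial) ideal `J`. -/
noncomputable def complexOfExtIdeal (K : Type*) [Field K] (V : Finset ℕ)
    (J : Ideal (ExtAlg K)) : Set (Finset ℕ) :=
  {F | F ⊆ V ∧ eMon K F ∉ J}

/-- Nongeneric exterior shifting `Δ_φ(Γ)`, defined by `J_{Δ_φ(Γ)} = in(φ(J_Γ))` for an
individual linear change of coordinates `φ` given by the matrix `M`. -/
noncomputable def DeltaPhi (K : Type*) [Field K] (V : Finset ℕ)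
    (M : Matrix (Fin V.card) (Fin V.card) K) (Γ : Set (Finset ℕ)) : Set (Finset ℕ) :=
  complexOfExtIdeal K V (extInitialIdeal K (Ideal.map (extAlgMap K V M) (extFaceIdeal K V Γ)))

/-- The shifting-theoretic upper bound relation for a `(d-1)`-dimensional complex `Γ` on the
vertex set `V`: `Δᵉ(Γ) ⊆ Δ(V,d)`. -/
def ShiftingUBR (K : Type*) [Field K] (V : Finset ℕ) (d : ℕ) (Γ : Set (Finset ℕ)) : Prop :=
  ∀ Δe, IsExteriorShift K V Γ Δe → Δe ⊆ DeltaV V d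
/-! Graded pieces, linear systems of parameters, the Cohen–Macaulay property and the strong
Lefschetz property for graded quotients `A = K[x_1,…,x_n]/I`. -/

/-- The degree-`k` homogeneous component of the graded quotient `S/I` (the image of the
degree-`k` homogeneous polynomials). -/
noncomputable def quotPiece {K : Type*} [Field K] {n : ℕ}
    (I : Ideal (MvPolynomial (Fin n) K)) (k : ℕ) :
    Submodule K (MvPolynomial (Fin n) K ⧸ I) :=
  (MvPolynomial.homogeneousSubmodule (Fin n) K k).map (Ideal.Quotient.mkₐ K I).toLinearMap

/-- `θ_1, …, θ_d` is a linear system of parameters of `S/I`: the `θ_a` are linear forms and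
the quotient `S/(I + (θ_1,…,θ_d))` has Krull dimension `≤ 0`. -/
def IsLSOP {K : Type*} [Field K] {n : ℕ} (I : Ideal (MvPolynomial (Fin n) K)) (d : ℕ)
    (θ : Fin d → MvPolynomial (Fin n) K) : Prop :=
  (∀ a, (θ a).IsHomogeneous 1) ∧
    ringKrullDim (MvPolynomial (Fin n) K ⧸ (I ⊔ Ideal.span (Set.range θ))) ≤ 0

set_option synthInstance.maxHeartbeats 1000000 in
/-- The graded quotient `A = S/I` is Cohen–Macaulay: a linear system of parameters of
length `d = dim A` forms a regular `A`-sequence. -/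
def IsCMIdeal {K : Type*} [Field K] {n : ℕ} (I : Ideal (MvPolynomial (Fin n) K)) : Prop :=
  ∃ d : ℕ, ringKrullDim (MvPolynomial (Fin n) K ⧸ I) = d ∧
    ∃ θ : Fin d → MvPolynomial (Fin n) K, IsLSOP I d θ ∧
      RingTheory.Sequence.IsRegular (MvPolynomial (Fin n) K ⧸ I)
        ((List.ofFn θ).map (⇑(Ideal.Quotient.mk I)))

/-- The graded quotient `A = S/I` has the strong Lefschetz property: `A` is Cohen–Macaulay
and there are an l.s.o.p. `θ_1, …, θ_d` (`d = dim A`) and a linear form `ω` such that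
`ω^{s-2i} : (A/θA)_i → (A/θA)_{s-i}` is bijective for `0 ≤ i ≤ s/2`, where
`s = max{k : (A/θA)_k ≠ 0}`. -/
def HasSLPIdeal {K : Type*} [Field K] {n : ℕ} (I : Ideal (MvPolynomial (Fin n) K)) : Prop :=
  IsCMIdeal I ∧
    ∃ d : ℕ, ringKrullDim (MvPolynomial (Fin n) K ⧸ I) = d ∧
      ∃ θ : Fin d → MvPolynomial (Fin n) K, IsLSOP I d θ ∧
        ∃ ω : MvPolynomial (Fin n) K, ω.IsHomogeneous 1 ∧
          ∃ s : ℕ,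
            (quotPiece (I ⊔ Ideal.span (Set.range θ)) s ≠ ⊥ ∧
              ∀ k, s < k → quotPiece (I ⊔ Ideal.span (Set.range θ)) k = ⊥) ∧
            ∀ i : ℕ, 2 * i ≤ s →
              Set.BijOn
                (fun x => (Ideal.Quotient.mk (I ⊔ Ideal.span (Set.range θ)) ω) ^ (s - 2 * i) * x)
                (quotPiece (I ⊔ Ideal.span (Set.range θ)) i)
                (quotPiece (I ⊔ Ideal.span (Set.range θ)) (s - i))

/-- A simplicial complex is Cohen–Macaulay over `K` if its Stanley–Reisner ring is. -/
def ComplexCM (K : Type*) [Field K] (n : ℕ) (Γ : Set (Finset ℕ)) : Prop :=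
  IsCMIdeal (srIdeal K n Γ)

/-- A `(d-1)`-dimensional complex `Γ` has the strong Lefschetz property if `h_d(Γ) > 0` and
its Stanley–Reisner ring has the strong Lefschetz property. -/
def ComplexSLP (K : Type*) [Field K] (n d : ℕ) (Γ : Set (Finset ℕ)) : Prop :=
  0 < hvec d Γ d ∧ HasSLPIdeal (srIdeal K n Γ)

/-- A `1`-dimensional simplicial sphere (a cycle): a complex all of whose faces are edges or
smaller, every vertex lying in exactly two edges, whose edge graph is connected. -/
def IsCycleComplex (V : Finset ℕ) (Γ : Set (Finset ℕ)) : Prop :=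
  SimplicialComplexOn V Γ ∧ (∀ F ∈ Γ, F.card ≤ 2) ∧
    (∀ v ∈ V, {e | e ∈ Γ ∧ e.card = 2 ∧ v ∈ e}.ncard = 2) ∧
    ∀ u ∈ V, ∀ v ∈ V,
      Relation.ReflTransGen (fun a b : ℕ => ({a, b} : Finset ℕ) ∈ Γ) u v

/-! Auxiliary development for `stmt3`. -/
namespace Stmt3Aux
open MvPolynomial Finset

variable {K : Type} [Field K] {n : ℕ}

/-- indicator exponent vector of `F` -/
noncomputable def ind (n : ℕ) (F : Finset ℕ) : Fin n →₀ ℕ :=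
  Finsupp.equivFunOnFinite.symm fun k => if (k : ℕ) + 1 ∈ F then 1 else 0

@[simp] lemma ind_apply (F : Finset ℕ) (k : Fin n) :
    ind n F k = if (k : ℕ) + 1 ∈ F then 1 else 0 := by
  simp [ind]

lemma prod_X_eq (s : Finset (Fin n)) :
    (∏ x ∈ s, X x : MvPolynomial (Fin n) K) =
      monomial (∑ x ∈ s, Finsupp.single x 1) 1 := by
  classical
  induction s using Finset.induction_on with
  | empty => simp
  | insert _ _ hx ih =>
      rw [Finset.prod_insert hx, Finset.sum_insert hx, ih, X, monomial_mul, one_mul]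

lemma faceMonomial_eq (F : Finset ℕ) :
    faceMonomial K n F = monomial (ind n F) 1 := by
  classical
  rw [faceMonomial, prod_X_eq]
  have h : (∑ x ∈ Finset.univ.filter (fun a : Fin n => (a : ℕ) + 1 ∈ F), Finsupp.single x 1)
      = ind n F := by
    ext k
    rw [Finsupp.finset_sum_apply]
    simp [Finsupp.single_apply, Finset.sum_ite_eq, ind_apply]
  rw [h]

lemma mem_srIdeal_iff (Δ : Set (Finset ℕ)) (p : MvPolynomial (Fin n) K) :
    p ∈ srIdeal K n Δ ↔
      ∀ v ∈ p.support, ∃ F, F ⊆ Finset.Icc 1 n ∧ F ∉ Δ ∧ ind n F ≤ v := by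
  classical
  have hset : {f | ∃ F : Finset ℕ, F ⊆ Finset.Icc 1 n ∧ F ∉ Δ ∧ f = faceMonomial K n F} =
      (fun s => (monomial s) (1 : K)) ''
        {s | ∃ F : Finset ℕ, F ⊆ Finset.Icc 1 n ∧ F ∉ Δ ∧ s = ind n F} := by
    ext f
    constructor
    · rintro ⟨F, h1, h2, rfl⟩
      exact ⟨ind n F, ⟨F, h1, h2, rfl⟩, (faceMonomial_eq F).symm⟩
    · rintro ⟨s, ⟨F, h1, h2, rfl⟩, rfl⟩
      exact ⟨F, h1, h2, (faceMonomial_eq F).symm⟩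
  rw [srIdeal, hset, mem_ideal_span_monomial_image]
  constructor
  · intro h v hv
    obtain ⟨si, ⟨F, h1, h2, rfl⟩, hle⟩ := h v hv
    exact ⟨F, h1, h2, hle⟩
  · intro h v hv
    obtain ⟨F, h1, h2, hle⟩ := h v hv
    exact ⟨ind n F, ⟨F, h1, h2, rfl⟩, hle⟩

/-- support of an exponent vector, as subset of `[n]`. -/
noncomputable def suppSet (v : Fin n →₀ ℕ) : Finset ℕ :=
  v.support.image (fun k : Fin n => (k : ℕ) + 1)

lemma mem_suppSet {v : Fin n →₀ ℕ} {x : ℕ} :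
    x ∈ suppSet v ↔ ∃ k : Fin n, v k ≠ 0 ∧ (k : ℕ) + 1 = x := by
  simp [suppSet, Finsupp.mem_support_iff]

lemma suppSet_subset (v : Fin n →₀ ℕ) : suppSet v ⊆ Finset.Icc 1 n := by
  intro x hx
  obtain ⟨k, _, rfl⟩ := mem_suppSet.mp hx
  simp [Finset.mem_Icc]

lemma ind_suppSet_le (v : Fin n →₀ ℕ) : ind n (suppSet v) ≤ v := by
  intro k
  rw [ind_apply]
  split_ifs with h
  · obtain ⟨k', hk', hkk⟩ := mem_suppSet.mp h
    have : k' = k := by ext; omega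
    subst this; omega
  · omega

lemma subset_suppSet_of_ind_le {F : Finset ℕ} (hF : F ⊆ Finset.Icc 1 n)
    {v : Fin n →₀ ℕ} (h : ind n F ≤ v) : F ⊆ suppSet v := by
  intro x hx
  have hx' := hF hx
  rw [Finset.mem_Icc] at hx'
  have hk : ((⟨x - 1, by omega⟩ : Fin n) : ℕ) + 1 = x := by simp; omega
  have h2 := h ⟨x - 1, by omega⟩
  rw [ind_apply] at h2
  simp only [hk, if_pos hx] at h2
  exact mem_suppSet.mpr ⟨⟨x - 1, by omega⟩, by omega, hk⟩


/-! ### The substitution `x_b ↦ x_b + c x_a` and its coefficient formulas -/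

noncomputable def phiC (a b : Fin n) (c : K) :
    MvPolynomial (Fin n) K →ₐ[K] MvPolynomial (Fin n) K :=
  aeval (fun k => if k = b then C c * X a + X k else X k)

noncomputable def Ev (a b : Fin n) (v : Fin n →₀ ℕ) (t : ℕ) : Fin n →₀ ℕ :=
  Finsupp.equivFunOnFinite.symm fun k =>
    if k = a then v a + t else if k = b then v b - t else v k

noncomputable def Wd (a b : Fin n) (w : Fin n →₀ ℕ) (t : ℕ) : Fin n →₀ ℕ :=
  Finsupp.equivFunOnFinite.symm fun k =>
    if k = a then w a - t else if k = b then w b + t else w k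

lemma Ev_apply (a b : Fin n) (v : Fin n →₀ ℕ) (t : ℕ) (k : Fin n) :
    Ev a b v t k = if k = a then v a + t else if k = b then v b - t else v k := by
  simp [Ev]

lemma Wd_apply (a b : Fin n) (w : Fin n →₀ ℕ) (t : ℕ) (k : Fin n) :
    Wd a b w t k = if k = a then w a - t else if k = b then w b + t else w k := by
  simp [Wd]

lemma Ev_zero (a b : Fin n) (v : Fin n →₀ ℕ) : Ev a b v 0 = v := by
  ext k
  rw [Ev_apply]
  split_ifs with h1 h2
  · subst h1; omega
  · subst h2; omega
  · rfl

lemma expand (a b : Fin n) (hab : a ≠ b) (c : K) (v : Fin n →₀ ℕ) (r : K) :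
    phiC a b c (monomial v r) =
      ∑ t ∈ Finset.range (v b + 1),
        monomial (Ev a b v t) (r * (c ^ t * (Nat.choose (v b) t : K))) := by
  classical
  have h1 : (monomial v r : MvPolynomial (Fin n) K)
      = monomial (v.erase b) r * X b ^ (v b) := by
    rw [X_pow_eq_monomial, monomial_mul, mul_one, Finsupp.erase_add_single]
  have h2 : phiC a b c (monomial (v.erase b) r) = monomial (v.erase b) r := by
    rw [phiC, aeval_monomial, monomial_eq, algebraMap_eq]
    congr 1
    apply Finsupp.prod_congr
    intro k hk
    have hkb : k ≠ b := by
      rw [Finsupp.support_erase, Finset.mem_erase] at hk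
      exact hk.1
    rw [if_neg hkb]
  have h3 : phiC a b c (X b) = C c * X a + X b := by
    simp [phiC]
  rw [h1, map_mul, map_pow, h2, h3, add_pow, Finset.mul_sum]
  apply Finset.sum_congr rfl
  intro t ht
  rw [Finset.mem_range] at ht
  have h4 : (C c * X a : MvPolynomial (Fin n) K) ^ t * X b ^ (v b - t)
        * ((Nat.choose (v b) t : ℕ) : MvPolynomial (Fin n) K)
      = monomial (Finsupp.single a t + Finsupp.single b (v b - t))
          (c ^ t * (Nat.choose (v b) t : K)) := by
    rw [mul_pow, ← C_pow, X_pow_eq_monomial, X_pow_eq_monomial, C_mul_monomial,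
      monomial_mul, ← C_eq_coe_nat, mul_comm _ (C ((Nat.choose (v b) t : ℕ) : K)),
      C_mul_monomial]
    congr 1
    push_cast
    ring
  have hE : Finsupp.erase b v + (Finsupp.single a t + Finsupp.single b (v b - t))
      = Ev a b v t := by
    ext k
    rw [Finsupp.add_apply, Finsupp.add_apply, Ev_apply]
    rcases eq_or_ne k a with rfl | hka
    · rw [if_pos rfl, Finsupp.erase_ne hab, Finsupp.single_eq_same,
        Finsupp.single_eq_of_ne' (Ne.symm hab)]
      omega
    · rcases eq_or_ne k b with rfl | hkb
      · rw [if_neg hka, if_pos rfl, Finsupp.erase_same, Finsupp.single_eq_of_ne' (Ne.symm hka),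
          Finsupp.single_eq_same]
        omega
      · rw [if_neg hka, if_neg hkb, Finsupp.erase_ne hkb, Finsupp.single_eq_of_ne' (Ne.symm hka),
          Finsupp.single_eq_of_ne' (Ne.symm hkb)]
        omega
  rw [h4, monomial_mul, hE]

lemma coeff_phiC (a b : Fin n) (hab : a ≠ b) (c : K) (g : MvPolynomial (Fin n) K)
    (w : Fin n →₀ ℕ) :
    coeff w (phiC a b c g) =
      ∑ v ∈ g.support, ∑ t ∈ Finset.range (v b + 1),
        (if Ev a b v t = w then coeff v g * (c ^ t * (Nat.choose (v b) t : K)) else 0) := by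
  conv_lhs => rw [← support_sum_monomial_coeff g]
  rw [map_sum, coeff_sum]
  apply Finset.sum_congr rfl
  intro v _
  rw [expand a b hab, coeff_sum]
  apply Finset.sum_congr rfl
  intro t _
  rw [coeff_monomial]

lemma Ev_inj (a b : Fin n) (hab : a ≠ b) {v w : Fin n →₀ ℕ} {t : ℕ} (htv : t ≤ v b)
    (h : Ev a b v t = w) : t ≤ w a ∧ v = Wd a b w t := by
  have h' : ∀ k, Ev a b v t k = w k := fun k => by rw [h]
  have ha' := h' a
  have hb' := h' b
  rw [Ev_apply, if_pos rfl] at ha'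
  rw [Ev_apply, if_neg (Ne.symm hab), if_pos rfl] at hb'
  refine ⟨by omega, ?_⟩
  ext k
  rw [Wd_apply]
  rcases eq_or_ne k a with rfl | hka
  · rw [if_pos rfl]; omega
  rcases eq_or_ne k b with rfl | hkb
  · rw [if_neg hka, if_pos rfl]; omega
  · rw [if_neg hka, if_neg hkb]
    have hk := h' k
    rw [Ev_apply, if_neg hka, if_neg hkb] at hk
    omega

lemma Wd_Ev (a b : Fin n) (hab : a ≠ b) {w : Fin n →₀ ℕ} {t : ℕ} (htw : t ≤ w a) :
    Ev a b (Wd a b w t) t = w := by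
  ext k
  rw [Ev_apply]
  rcases eq_or_ne k a with rfl | hka
  · rw [if_pos rfl, Wd_apply, if_pos rfl]; omega
  rcases eq_or_ne k b with rfl | hkb
  · rw [if_neg hka, if_pos rfl, Wd_apply, if_neg hka, if_pos rfl]; omega
  · rw [if_neg hka, if_neg hkb, Wd_apply, if_neg hka, if_neg hkb]

lemma coeff_phiC_a_zero (a b : Fin n) (hab : a ≠ b) (c : K) (g : MvPolynomial (Fin n) K)
    (w : Fin n →₀ ℕ) (hw : w a = 0) :
    coeff w (phiC a b c g) = coeff w g := by
  rw [coeff_phiC a b hab]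
  have h1 : ∀ v ∈ g.support, v ≠ w →
      (∑ t ∈ Finset.range (v b + 1),
        (if Ev a b v t = w then coeff v g * (c ^ t * (Nat.choose (v b) t : K)) else 0)) = 0 := by
    intro v _ hvw
    apply Finset.sum_eq_zero
    intro t _
    rw [if_neg]
    intro hEq
    have hEa := DFunLike.congr_fun hEq a
    rw [Ev_apply, if_pos rfl] at hEa
    have ht0 : t = 0 := by omega
    subst ht0
    rw [Ev_zero] at hEq
    exact hvw hEq
  have h2 : w ∉ g.support →
      (∑ t ∈ Finset.range (w b + 1),
        (if Ev a b w t = w then coeff w g * (c ^ t * (Nat.choose (w b) t : K)) else 0)) = 0 := by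
    intro hw'
    apply Finset.sum_eq_zero
    intro t _
    split_ifs
    · rw [notMem_support_iff.mp hw', zero_mul]
    · rfl
  rw [Finset.sum_eq_single w h1 h2]
  have h3 : ∀ t ∈ Finset.range (w b + 1), t ≠ 0 →
      (if Ev a b w t = w then coeff w g * (c ^ t * (Nat.choose (w b) t : K)) else 0) = 0 := by
    intro t _ ht0
    rw [if_neg]
    intro hEq
    have hEa := DFunLike.congr_fun hEq a
    rw [Ev_apply, if_pos rfl] at hEa
    omega
  rw [Finset.sum_eq_single 0 h3 (fun h0 => absurd (Finset.mem_range.mpr (by omega)) h0)]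
  rw [if_pos (Ev_zero a b w)]
  simp

lemma coeff_phiC_b_zero (a b : Fin n) (hab : a ≠ b) (c : K) (g : MvPolynomial (Fin n) K)
    (w : Fin n →₀ ℕ) (hw : w b = 0) :
    coeff w (phiC a b c g) =
      ∑ t ∈ Finset.range (w a + 1), c ^ t * coeff (Wd a b w t) g := by
  rw [coeff_phiC a b hab]
  have rhs : ∀ t ∈ Finset.range (w a + 1),
      c ^ t * coeff (Wd a b w t) g
        = ∑ v ∈ g.support, (if v = Wd a b w t then c ^ t * coeff v g else 0) := by
    intro t _
    rw [Finset.sum_ite_eq' g.support (Wd a b w t) (fun v => c ^ t * coeff v g)]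
    split_ifs with h
    · rfl
    · rw [notMem_support_iff.mp h, mul_zero]
  rw [Finset.sum_congr rfl rhs, Finset.sum_comm]
  apply Finset.sum_congr rfl
  intro v _
  by_cases hEv : Ev a b v (v b) = w
  · obtain ⟨hle, hvW⟩ := Ev_inj a b hab (le_refl (v b)) hEv
    have h1 : ∀ t ∈ Finset.range (v b + 1), t ≠ v b →
        (if Ev a b v t = w then coeff v g * (c ^ t * (Nat.choose (v b) t : K)) else 0) = 0 := by
      intro t ht htv
      rw [Finset.mem_range] at ht
      rw [if_neg]
      intro hEq
      have hEb := DFunLike.congr_fun hEq b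
      rw [Ev_apply, if_neg (Ne.symm hab), if_pos rfl] at hEb
      omega
    have h2 : ∀ t ∈ Finset.range (w a + 1), t ≠ v b →
        (if v = Wd a b w t then c ^ t * coeff v g else 0) = 0 := by
      intro t _ htv
      rw [if_neg]
      intro hEq
      have hEb := DFunLike.congr_fun hEq b
      rw [Wd_apply, if_neg (Ne.symm hab), if_pos rfl] at hEb
      omega
    rw [Finset.sum_eq_single (v b) h1
        (fun h0 => absurd (Finset.mem_range.mpr (by omega)) h0),
      Finset.sum_eq_single (v b) h2
        (fun h0 => absurd (Finset.mem_range.mpr (by omega)) h0),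
      if_pos hEv, if_pos hvW, Nat.choose_self]
    push_cast
    ring
  · have h1 : ∀ t ∈ Finset.range (v b + 1),
        (if Ev a b v t = w then coeff v g * (c ^ t * (Nat.choose (v b) t : K)) else 0) = 0 := by
      intro t ht
      rw [Finset.mem_range] at ht
      rw [if_neg]
      intro hEq
      have hEb := DFunLike.congr_fun hEq b
      rw [Ev_apply, if_neg (Ne.symm hab), if_pos rfl] at hEb
      have : t = v b := by omega
      subst this
      exact hEv hEq
    have h2 : ∀ t ∈ Finset.range (w a + 1),
        (if v = Wd a b w t then c ^ t * coeff v g else 0) = 0 := by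
      intro t ht
      rw [Finset.mem_range] at ht
      rw [if_neg]
      intro hEq
      have hEb := DFunLike.congr_fun hEq b
      rw [Wd_apply, if_neg (Ne.symm hab), if_pos rfl] at hEb
      have htv : t = v b := by omega
      apply hEv
      rw [← htv, hEq]
      exact Wd_Ev a b hab (by omega)
    rw [Finset.sum_eq_zero h1]
    exact (Finset.sum_eq_zero h2).symm

lemma coeff_phiC_zero (a b : Fin n) (hab : a ≠ b) (c : K) (g : MvPolynomial (Fin n) K)
    (w : Fin n →₀ ℕ) (h : ∀ t, t ≤ w a → coeff (Wd a b w t) g = 0) :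
    coeff w (phiC a b c g) = 0 := by
  rw [coeff_phiC a b hab]
  apply Finset.sum_eq_zero
  intro v _
  apply Finset.sum_eq_zero
  intro t ht
  rw [Finset.mem_range] at ht
  split_ifs with hEv
  · obtain ⟨hle, hvW⟩ := Ev_inj a b hab (by omega) hEv
    rw [hvW, h t hle, zero_mul]
  · rfl

lemma phiC_phiC (a b : Fin n) (hab : a ≠ b) (c : K) (p : MvPolynomial (Fin n) K) :
    phiC a b (-c) (phiC a b c p) = p := by
  have hcomp : (phiC a b (-c)).comp (phiC a b c) = AlgHom.id K (MvPolynomial (Fin n) K) := by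
    apply algHom_ext
    intro k
    simp only [AlgHom.comp_apply, AlgHom.id_apply, phiC, aeval_X]
    by_cases hk : k = b
    · subst hk
      rw [if_pos rfl]
      simp only [map_add, map_mul, aeval_X, aeval_C, algebraMap_eq, if_pos rfl,
        if_neg hab, if_true, map_neg]
      ring
    · rw [if_neg hk, aeval_X, if_neg hk]
  exact DFunLike.congr_fun hcomp p

lemma phiC_fix (a b : Fin n) (hab : a ≠ b) (c : K) {v : Fin n →₀ ℕ} (r : K) (hvb : v b = 0) :
    phiC a b c (monomial v r) = monomial v r := by
  rw [expand a b hab, hvb]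
  simp [Ev_zero]

lemma phiC_two (a b : Fin n) (hab : a ≠ b) {v : Fin n →₀ ℕ} (r : K) (hvb : v b = 1) :
    phiC a b 1 (monomial v r) = monomial v r + monomial (Ev a b v 1) r := by
  rw [expand a b hab, hvb, Finset.sum_range_succ, Finset.sum_range_one]
  simp [Ev_zero]

/-! ### degrees and the degrevlex order -/

lemma degree_eq_sum (v : Fin n →₀ ℕ) : (v.sum fun _ e => e) = ∑ k, v k :=
  Finsupp.sum_fintype _ _ fun _ => rfl

lemma sum_univ_split (a b : Fin n) (hab : a ≠ b) (f : Fin n → ℕ) :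
    ∑ k, f k = f a + f b + ∑ k ∈ (Finset.univ.erase a).erase b, f k := by
  rw [← Finset.add_sum_erase _ f (Finset.mem_univ a),
    ← Finset.add_sum_erase _ f (Finset.mem_erase.mpr ⟨Ne.symm hab, Finset.mem_univ b⟩)]
  ring

lemma sum_Ev (a b : Fin n) (hab : a ≠ b) (v : Fin n →₀ ℕ) (t : ℕ) (ht : t ≤ v b) :
    ∑ k, Ev a b v t k = ∑ k, v k := by
  rw [sum_univ_split a b hab, sum_univ_split a b hab (f := fun k => v k)]
  have h3 : ∑ k ∈ (Finset.univ.erase a).erase b, Ev a b v t k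
      = ∑ k ∈ (Finset.univ.erase a).erase b, v k :=
    Finset.sum_congr rfl fun k hk => by
      have h4 := Finset.mem_erase.mp hk
      have h5 := Finset.mem_erase.mp h4.2
      rw [Ev_apply, if_neg h5.1, if_neg h4.1]
  rw [h3, Ev_apply, if_pos rfl, Ev_apply, if_neg (Ne.symm hab), if_pos rfl]
  omega

lemma sum_Wd (a b : Fin n) (hab : a ≠ b) (w : Fin n →₀ ℕ) (t : ℕ) (ht : t ≤ w a) :
    ∑ k, Wd a b w t k = ∑ k, w k := by
  rw [sum_univ_split a b hab, sum_univ_split a b hab (f := fun k => w k)]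
  have h3 : ∑ k ∈ (Finset.univ.erase a).erase b, Wd a b w t k
      = ∑ k ∈ (Finset.univ.erase a).erase b, w k :=
    Finset.sum_congr rfl fun k hk => by
      have h4 := Finset.mem_erase.mp hk
      have h5 := Finset.mem_erase.mp h4.2
      rw [Wd_apply, if_neg h5.1, if_neg h4.1]
  rw [h3, Wd_apply, if_pos rfl, Wd_apply, if_neg (Ne.symm hab), if_pos rfl]
  omega

lemma drl_asymm {u v : Fin n →₀ ℕ} (h1 : DegRevLexLT u v) (h2 : DegRevLexLT v u) : False := by
  rcases h1 with h1 | ⟨e1, k1, hk1, ha1⟩ <;> rcases h2 with h2 | ⟨e2, k2, hk2, ha2⟩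
  · omega
  · omega
  · omega
  · rcases lt_trichotomy k1 k2 with h | h | h
    · have := ha1 k2 h
      omega
    · subst h
      omega
    · have := ha2 k1 h
      omega


/-! ### degrevlex comparison for the two-term images -/

lemma drl_lemma (a b : Fin n) (hba : a < b) (v : Fin n →₀ ℕ) (hvb : 1 ≤ v b) :
    DegRevLexLT v (Ev a b v 1) := by
  refine Or.inr ⟨?_, b, ?_, ?_⟩
  · rw [degree_eq_sum, degree_eq_sum, sum_Ev a b (ne_of_lt hba) v 1 hvb]
  · rw [Ev_apply, if_neg (Ne.symm (ne_of_lt hba)), if_pos rfl]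
    omega
  · intro l hl
    have hla : l ≠ a := by
      intro h
      rw [h] at hl
      exact absurd hl (not_lt.mpr hba.le)
    rw [Ev_apply, if_neg hla, if_neg (ne_of_gt hl)]

lemma ind_add_single (b : Fin n) (G : Finset ℕ) (hbG : (b : ℕ) + 1 ∈ G) :
    ind n (G.erase ((b : ℕ) + 1)) + Finsupp.single b 1 = ind n G := by
  ext k
  rw [Finsupp.add_apply, ind_apply, ind_apply, Finsupp.single_apply]
  rcases eq_or_ne k b with rfl | hkb
  · rw [if_neg (Finset.notMem_erase _ _), if_pos rfl, if_pos hbG]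
  · have hne : (k : ℕ) + 1 ≠ (b : ℕ) + 1 := by
      intro h
      exact hkb (Fin.ext (by omega))
    rw [if_neg (Ne.symm hkb)]
    by_cases hx : (k : ℕ) + 1 ∈ G
    · rw [if_pos (Finset.mem_erase.mpr ⟨hne, hx⟩), if_pos hx]
      omega
    · rw [if_neg (fun hc => hx (Finset.mem_of_mem_erase hc)), if_neg hx]
      omega

/-! ### membership in the shifted complex -/

lemma mem_shiftComplex_iff (Γ : Set (Finset ℕ)) (i j : ℕ) (hij : i ≠ j) (A : Finset ℕ) :
    A ∈ shiftComplex Γ i j ↔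
      (if i ∈ A then (A ∈ Γ ∧ (j ∈ A ∨ A.erase i ∪ {j} ∈ Γ))
       else (A ∈ Γ ∨ (j ∈ A ∧ insert i (A.erase j) ∈ Γ))) := by
  constructor
  · rintro ⟨F, hF, hmap⟩
    unfold shiftMap at hmap
    split_ifs at hmap with hc
    · obtain ⟨hiF, hjF, hU⟩ := hc
      subst hmap
      have hiA : i ∉ F.erase i ∪ {j} := by simp [hij]
      rw [if_neg hiA]
      right
      refine ⟨by simp, ?_⟩
      have h1 : (F.erase i ∪ {j}).erase j = F.erase i := by
        ext x
        simp only [Finset.mem_erase, Finset.mem_union, Finset.mem_singleton]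
        constructor
        · rintro ⟨hxj, hx | rfl⟩
          · exact hx
          · exact absurd rfl hxj
        · intro hx
          exact ⟨fun h => hjF (h ▸ hx.2), Or.inl hx⟩
      rw [h1, Finset.insert_erase hiF]
      exact hF
    · subst hmap
      push_neg at hc
      by_cases hiA : i ∈ F
      · rw [if_pos hiA]
        refine ⟨hF, ?_⟩
        by_cases hjA : j ∈ F
        · exact Or.inl hjA
        · exact Or.inr (hc hiA hjA)
      · rw [if_neg hiA]
        exact Or.inl hF
  · intro h
    by_cases hiA : i ∈ A
    · rw [if_pos hiA] at h
      obtain ⟨hA, hor⟩ := h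
      refine ⟨A, hA, ?_⟩
      unfold shiftMap
      rw [if_neg]
      rintro ⟨-, hj, hU⟩
      exact hU (hor.resolve_left hj)
    · rw [if_neg hiA] at h
      rcases h with hA | ⟨hjA, hH⟩
      · refine ⟨A, hA, ?_⟩
        unfold shiftMap
        rw [if_neg (by rintro ⟨hi, -, -⟩; exact hiA hi)]
      · by_cases hA : A ∈ Γ
        · refine ⟨A, hA, ?_⟩
          unfold shiftMap
          rw [if_neg (by rintro ⟨hi, -, -⟩; exact hiA hi)]
        · refine ⟨insert i (A.erase j), hH, ?_⟩
          unfold shiftMap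
          have h1 : i ∈ insert i (A.erase j) := Finset.mem_insert_self _ _
          have h2 : j ∉ insert i (A.erase j) := by
            simp [Finset.mem_insert, Ne.symm hij]
          have h3 : (insert i (A.erase j)).erase i ∪ {j} = A := by
            rw [Finset.erase_insert (by simp [hiA]), Finset.union_comm,
              ← Finset.insert_eq, Finset.insert_erase hjA]
          rw [if_pos ⟨h1, h2, by rw [h3]; exact hA⟩, h3]

/-! ### the key consequence of the hypothesis on minimal generators -/

set_option maxHeartbeats 1000000 in
lemma star_lemma (n i j : ℕ) (hi : 1 ≤ i) (hij : i < j) (hj : j ≤ n)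
    (Γ : Set (Finset ℕ)) (hΓ : SimplicialComplexOn (Finset.Icc 1 n) Γ)
    (hgen : ∀ u ∈ minimalMonomialGens (srIdeal K n Γ),
      ¬ (0 < u ⟨i - 1, Nat.sub_one_lt_of_le hi (hij.le.trans hj)⟩ ∧
        0 < u ⟨j - 1, Nat.sub_one_lt_of_le (Nat.zero_lt_of_lt hij) hj⟩))
    (F : Finset ℕ) (hFn : F ⊆ Finset.Icc 1 n) (hiF : i ∈ F) (hjF : j ∈ F)
    (hFΓ : F ∉ Γ) : F.erase i ∉ Γ ∨ F.erase j ∉ Γ := by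
  classical
  obtain ⟨G, hG, hGmin⟩ := Finset.exists_min_image
    (F.powerset.filter (· ∉ Γ)) Finset.card ⟨F, by simp [hFΓ]⟩
  rw [Finset.mem_filter, Finset.mem_powerset] at hG
  obtain ⟨hGF, hGΓ⟩ := hG
  have hGn : G ⊆ Finset.Icc 1 n := hGF.trans hFn
  have hmem : (monomial (ind n G) (1 : K)) ∈ srIdeal K n Γ := by
    rw [← faceMonomial_eq]
    exact Ideal.subset_span ⟨G, hGn, hGΓ, rfl⟩
  have hminG : ind n G ∈ minimalMonomialGens (srIdeal K n Γ) := by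
    refine ⟨hmem, fun v hv hvmem => ?_⟩
    rw [mem_srIdeal_iff] at hvmem
    have hsupp : v ∈ (monomial v (1 : K)).support := by
      rw [support_monomial, if_neg one_ne_zero]
      exact Finset.mem_singleton_self v
    obtain ⟨F', h1, h2, h3⟩ := hvmem v hsupp
    have hF'G : F' ⊆ G := by
      intro x hx
      have hx' := h1 hx
      rw [Finset.mem_Icc] at hx'
      obtain ⟨k, hk⟩ : ∃ k : Fin n, (k : ℕ) + 1 = x := ⟨⟨x - 1, by omega⟩, by simp; omega⟩
      have h4 := Finsupp.le_def.mp h3 k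
      have h5 := Finsupp.le_def.mp hv k
      rw [ind_apply, hk, if_pos hx] at h4
      by_contra hxG
      rw [ind_apply, hk, if_neg hxG] at h5
      omega
    have hmemF' : F' ∈ F.powerset.filter (· ∉ Γ) := by
      rw [Finset.mem_filter, Finset.mem_powerset]
      exact ⟨hF'G.trans hGF, h2⟩
    have hFG' : F' = G := Finset.eq_of_subset_of_card_le hF'G (hGmin F' hmemF')
    subst hFG'
    exact le_antisymm hv h3
  have hnot := hgen (ind n G) hminG
  rw [not_and_or] at hnot
  rcases hnot with h | h
  · left
    intro hcon
    apply hGΓ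
    apply hΓ.2.2 _ hcon G
    have hiG : i ∉ G := by
      intro hiG
      apply h
      rw [ind_apply]
      simp only [Fin.val_mk]
      rw [Nat.sub_add_cancel hi, if_pos hiG]
      exact one_pos
    exact fun x hx => Finset.mem_erase.mpr ⟨fun hxi => hiG (hxi ▸ hx), hGF hx⟩
  · right
    intro hcon
    apply hGΓ
    apply hΓ.2.2 _ hcon G
    have hjG : j ∉ G := by
      intro hjG
      apply h
      rw [ind_apply]
      simp only [Fin.val_mk]
      rw [Nat.sub_add_cancel (by omega : 1 ≤ j), if_pos hjG]
      exact one_pos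
    exact fun x hx => Finset.mem_erase.mpr ⟨fun hxj => hjG (hxj ▸ hx), hGF hx⟩

end Stmt3Aux

open MvPolynomial Stmt3Aux
set_option maxHeartbeats 2000000

/-- Lemma 2.2. If `I_Γ` has no minimal monomial generator divisible by
`x_i x_j`, then `in(φ_{ij}(I_Γ)) = I_{Shift_{ij}(Γ)}` w.r.t. the degree reverse
lexicographic order, where `φ_{ij}` maps `x_j ↦ x_i + x_j` and fixes the other variables. -/
theorem stmt3 (K : Type) [Field K] (n i j : ℕ) (hi : 1 ≤ i) (hij : i < j) (hj : j ≤ n)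
    (Γ : Set (Finset ℕ)) (hΓ : SimplicialComplexOn (Finset.Icc 1 n) Γ)
    (hgen : ∀ u ∈ minimalMonomialGens (srIdeal K n Γ),
      ¬ (0 < u ⟨i - 1, by omega⟩ ∧ 0 < u ⟨j - 1, by omega⟩)) :
    initialIdeal
        (Ideal.map
          (MvPolynomial.aeval (R := K) (fun k : Fin n =>
            if k = (⟨j - 1, by omega⟩ : Fin n) then
              MvPolynomial.X (⟨i - 1, by omega⟩ : Fin n) + MvPolynomial.X k
            else MvPolynomial.X k) :
              MvPolynomial (Fin n) K →ₐ[K] MvPolynomial (Fin n) K)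
          (srIdeal K n Γ)) =
      srIdeal K n (shiftComplex Γ i j) := by
  classical
  have hij' : i ≠ j := by omega
  have hgoal : (MvPolynomial.aeval (R := K) (fun k : Fin n =>
      if k = (⟨j - 1, by omega⟩ : Fin n) then
        MvPolynomial.X (⟨i - 1, by omega⟩ : Fin n) + MvPolynomial.X k
      else MvPolynomial.X k) : MvPolynomial (Fin n) K →ₐ[K] MvPolynomial (Fin n) K)
      = phiC (⟨i - 1, by omega⟩ : Fin n) (⟨j - 1, by omega⟩ : Fin n) (1 : K) := by
    unfold Stmt3Aux.phiC
    exact congrArg _ (funext fun k => by split_ifs <;> simp)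
  rw [hgoal]
  set a : Fin n := ⟨i - 1, by omega⟩ with haa
  set b : Fin n := ⟨j - 1, by omega⟩ with hbb
  have hav : (a : ℕ) = i - 1 := by rw [haa]
  have hbv : (b : ℕ) = j - 1 := by rw [hbb]
  have hia : (a : ℕ) + 1 = i := by omega
  have hjb : (b : ℕ) + 1 = j := by omega
  have hab : a ≠ b := fun h => by
    have := congrArg Fin.val h
    omega
  have hba : a < b := by
    rw [Fin.lt_def]
    omega
  have hk_a : ∀ k : Fin n, (k : ℕ) + 1 = i → k = a := fun k h => Fin.ext (by omega)
  have hk_b : ∀ k : Fin n, (k : ℕ) + 1 = j → k = b := fun k h => Fin.ext (by omega)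
  have hiIcc : i ∈ Finset.Icc 1 n := Finset.mem_Icc.mpr ⟨hi, by omega⟩
  have hjIcc : j ∈ Finset.Icc 1 n := Finset.mem_Icc.mpr ⟨by omega, hj⟩
  apply le_antisymm
  · -- initial ideal  ⊆  Stanley–Reisner ideal of the shifted complex
    rw [initialIdeal]
    apply Ideal.span_le.mpr
    rintro m ⟨f, hf, u, hu, rfl, hmax⟩
    have hg : phiC a b (-1 : K) f ∈ srIdeal K n Γ := by
      have hle : Ideal.map (phiC a b (1 : K)) (srIdeal K n Γ)
          ≤ Ideal.comap (phiC a b (-1 : K)) (srIdeal K n Γ) := by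
        rw [Ideal.map_le_iff_le_comap]
        intro x hx
        simp only [Ideal.mem_comap]
        rw [phiC_phiC a b hab 1 x]
        exact hx
      exact Ideal.mem_comap.mp (hle hf)
    have hsupports : ∀ v : Fin n →₀ ℕ,
        coeff v (phiC a b (-1 : K) f) ≠ 0 → suppSet v ∉ Γ := by
      intro v hvne hcon
      rw [mem_srIdeal_iff] at hg
      obtain ⟨F, h1, h2, h3⟩ := hg v (mem_support_iff.mpr hvne)
      exact h2 (hΓ.2.2 _ hcon F (subset_suppSet_of_ind_le h1 h3))
    have hcu : coeff u f ≠ 0 := mem_support_iff.mp hu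
    have key : suppSet u ∉ shiftComplex Γ i j := by
      intro hA
      rw [mem_shiftComplex_iff Γ i j hij'] at hA
      by_cases hiA : i ∈ suppSet u
      · rw [if_pos hiA] at hA
        obtain ⟨hAΓ, hor⟩ := hA
        have hBn : insert j (suppSet u) ⊆ Finset.Icc 1 n :=
          Finset.insert_subset_iff.mpr ⟨hjIcc, suppSet_subset u⟩
        have hBΓ : insert j (suppSet u) ∈ Γ := by
          by_cases hjA : j ∈ suppSet u
          · rwa [Finset.insert_eq_self.mpr hjA]
          · by_contra hB
            rcases star_lemma (K := K) n i j hi hij hj Γ hΓ hgen (insert j (suppSet u))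
              hBn (Finset.mem_insert_of_mem hiA) (Finset.mem_insert_self _ _) hB with h | h
            · apply h
              have heq : (insert j (suppSet u)).erase i = (suppSet u).erase i ∪ {j} := by
                ext x
                simp only [Finset.mem_erase, Finset.mem_insert, Finset.mem_union,
                  Finset.mem_singleton]
                constructor
                · rintro ⟨hxi, rfl | hxA⟩
                  · exact Or.inr rfl
                  · exact Or.inl ⟨hxi, hxA⟩
                · rintro (⟨hxi, hxA⟩ | rfl)
                  · exact ⟨hxi, Or.inr hxA⟩
                  · exact ⟨Ne.symm hij', Or.inl rfl⟩
              rw [heq]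
              exact hor.resolve_left hjA
            · apply h
              rw [Finset.erase_insert hjA]
              exact hAΓ
        apply hcu
        have hf2 : f = phiC a b 1 (phiC a b (-1 : K) f) := by
          have h := phiC_phiC a b hab (-1 : K) f
          rw [neg_neg] at h
          exact h.symm
        rw [hf2]
        apply coeff_phiC_zero a b hab
        intro t hta
        by_contra hcoeff
        apply hsupports _ hcoeff
        apply hΓ.2.2 _ hBΓ
        intro x hx
        obtain ⟨k, hk0, rfl⟩ := mem_suppSet.mp hx
        rw [Wd_apply] at hk0
        rcases eq_or_ne k a with rfl | hka
        · rw [hia]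
          exact Finset.mem_insert_of_mem hiA
        rcases eq_or_ne k b with rfl | hkb
        · rw [hjb]
          exact Finset.mem_insert_self j _
        · rw [if_neg hka, if_neg hkb] at hk0
          exact Finset.mem_insert_of_mem (mem_suppSet.mpr ⟨k, hk0, rfl⟩)
      · rw [if_neg hiA] at hA
        have hua : u a = 0 := by
          by_contra h0
          exact hiA (mem_suppSet.mpr ⟨a, h0, hia⟩)
        rcases hA with hAΓ | ⟨hjA, hHΓ⟩
        · refine hsupports u ?_ hAΓ
          rw [coeff_phiC_a_zero a b hab (-1 : K) f u hua]
          exact hcu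
        · have hub : u b ≠ 0 := by
            obtain ⟨k, hk0, hk1⟩ := mem_suppSet.mp hjA
            have hkb : k = b := hk_b k hk1
            rwa [hkb] at hk0
          set z := Ev a b u (u b) with hz
          have hzb : z b = 0 := by
            rw [hz, Ev_apply, if_neg (Ne.symm hab), if_pos rfl]
            omega
          have hza : z a = u b := by
            rw [hz, Ev_apply, if_pos rfl, hua]
            omega
          have hWzD : Wd a b z (u b) = u := by
            ext k
            rw [Wd_apply]
            rcases eq_or_ne k a with rfl | hka
            · rw [if_pos rfl]
              omega
            rcases eq_or_ne k b with rfl | hkb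
            · rw [if_neg hka, if_pos rfl]
              omega
            · rw [if_neg hka, if_neg hkb, hz, Ev_apply, if_neg hka, if_neg hkb]
          have hother : ∀ t, t < u b → coeff (Wd a b z t) f = 0 := by
            intro t htD
            by_contra hne
            have hneq : Wd a b z t ≠ u := by
              intro hcon
              have h := DFunLike.congr_fun hcon a
              rw [Wd_apply, if_pos rfl] at h
              omega
            have hlt := hmax _ (mem_support_iff.mpr hne) hneq
            apply drl_asymm hlt
            refine Or.inr ⟨?_, b, ?_, ?_⟩
            · rw [degree_eq_sum, degree_eq_sum, sum_Wd a b hab z t (by omega),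
                hz, sum_Ev a b hab u (u b) le_rfl]
            · rw [Wd_apply, if_neg (Ne.symm hab), if_pos rfl]
              omega
            · intro l hl
              have hla : l ≠ a := by
                intro h
                rw [h] at hl
                exact absurd hl (not_lt.mpr hba.le)
              rw [Wd_apply, if_neg hla, if_neg (ne_of_gt hl), hz, Ev_apply,
                if_neg hla, if_neg (ne_of_gt hl)]
          have hcz : coeff z (phiC a b (-1 : K) f) ≠ 0 := by
            rw [coeff_phiC_b_zero a b hab (-1 : K) f z hzb, hza]
            have hsingle : ∀ t ∈ Finset.range (u b + 1), t ≠ u b →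
                (-1 : K) ^ t * coeff (Wd a b z t) f = 0 := by
              intro t ht htD
              rw [Finset.mem_range] at ht
              rw [hother t (by omega), mul_zero]
            rw [Finset.sum_eq_single (u b) hsingle
              (fun h0 => absurd (Finset.mem_range.mpr (by omega)) h0), hWzD]
            exact mul_ne_zero (pow_ne_zero _ (neg_ne_zero.mpr one_ne_zero)) hcu
          apply hsupports z hcz
          apply hΓ.2.2 _ hHΓ
          intro x hx
          obtain ⟨k, hk0, rfl⟩ := mem_suppSet.mp hx
          rw [hz, Ev_apply] at hk0
          rcases eq_or_ne k a with rfl | hka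
          · rw [hia]
            exact Finset.mem_insert_self i _
          rcases eq_or_ne k b with rfl | hkb
          · rw [if_neg hka, if_pos rfl] at hk0
            omega
          · rw [if_neg hka, if_neg hkb] at hk0
            refine Finset.mem_insert_of_mem (Finset.mem_erase.mpr ⟨?_, ?_⟩)
            · intro hcon
              exact hkb (hk_b k hcon)
            · exact mem_suppSet.mpr ⟨k, hk0, rfl⟩
    have heq : (monomial u (1 : K))
        = faceMonomial K n (suppSet u) * monomial (u - ind n (suppSet u)) 1 := by
      rw [faceMonomial_eq, monomial_mul, one_mul, add_tsub_cancel_of_le (ind_suppSet_le u)]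
    rw [heq]
    exact Ideal.mul_mem_right _ _ (Ideal.subset_span ⟨suppSet u, suppSet_subset u, key, rfl⟩)
  · -- Stanley–Reisner ideal of the shifted complex  ⊆  initial ideal
    rw [srIdeal]
    apply Ideal.span_le.mpr
    rintro f ⟨G, hGn, hGS, rfl⟩
    rw [faceMonomial_eq]
    rw [mem_shiftComplex_iff Γ i j hij'] at hGS
    have hmem_init : ∀ (f₀ : MvPolynomial (Fin n) K) (u w : Fin n →₀ ℕ),
        f₀ ∈ Ideal.map (phiC a b (1 : K)) (srIdeal K n Γ) → coeff u f₀ ≠ 0 →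
        (∀ v ∈ f₀.support, v ≠ u → DegRevLexLT v u) → u + w = ind n G →
        monomial (ind n G) (1 : K)
          ∈ initialIdeal (Ideal.map (phiC a b (1 : K)) (srIdeal K n Γ)) := by
      intro f₀ u w hf₀ hcoeff hmax hsum
      have h1 : monomial u (1 : K)
          ∈ initialIdeal (Ideal.map (phiC a b (1 : K)) (srIdeal K n Γ)) :=
        Ideal.subset_span ⟨f₀, hf₀, u, mem_support_iff.mpr hcoeff, rfl, hmax⟩
      have h2 : monomial (ind n G) (1 : K) = monomial u 1 * monomial w 1 := by
        rw [monomial_mul, one_mul, hsum]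
      rw [h2]
      exact Ideal.mul_mem_right _ _ h1
    -- the single-monomial construction
    have hsingle : ∀ F : Finset ℕ, F ⊆ Finset.Icc 1 n → F ∉ Γ → j ∉ F →
        (w : Fin n →₀ ℕ) → ind n F + w = ind n G →
        monomial (ind n G) (1 : K)
          ∈ initialIdeal (Ideal.map (phiC a b (1 : K)) (srIdeal K n Γ)) := by
      intro F hFn hFΓ hjF w hsum
      have hFb : ind n F b = 0 := by
        rw [ind_apply, if_neg]
        rw [hjb]
        exact hjF
      have hFmem : faceMonomial K n F ∈ srIdeal K n Γ :=
        Ideal.subset_span ⟨F, hFn, hFΓ, rfl⟩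
      have hmap := Ideal.mem_map_of_mem (phiC a b (1 : K)) hFmem
      rw [faceMonomial_eq, phiC_fix a b hab 1 (1 : K) hFb] at hmap
      apply hmem_init _ (ind n F) w hmap ?_ ?_ hsum
      · rw [coeff_monomial, if_pos rfl]
        exact one_ne_zero
      · intro v hv hvne
        rw [support_monomial, if_neg one_ne_zero, Finset.mem_singleton] at hv
        exact absurd hv hvne
    -- the two-monomial construction
    have hdouble : ∀ F : Finset ℕ, F ⊆ Finset.Icc 1 n → F ∉ Γ → j ∈ F →
        (w : Fin n →₀ ℕ) → Ev a b (ind n F) 1 + w = ind n G →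
        monomial (ind n G) (1 : K)
          ∈ initialIdeal (Ideal.map (phiC a b (1 : K)) (srIdeal K n Γ)) := by
      intro F hFn hFΓ hjF w hsum
      have hFb : ind n F b = 1 := by
        rw [ind_apply, if_pos]
        rw [hjb]
        exact hjF
      have hFmem : faceMonomial K n F ∈ srIdeal K n Γ :=
        Ideal.subset_span ⟨F, hFn, hFΓ, rfl⟩
      have hmap := Ideal.mem_map_of_mem (phiC a b (1 : K)) hFmem
      rw [faceMonomial_eq, phiC_two a b hab (1 : K) hFb] at hmap
      have hne : ind n F ≠ Ev a b (ind n F) 1 := by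
        intro h
        have h2 := DFunLike.congr_fun h a
        rw [Ev_apply, if_pos rfl] at h2
        omega
      apply hmem_init _ (Ev a b (ind n F) 1) w hmap ?_ ?_ hsum
      · rw [coeff_add, coeff_monomial, coeff_monomial, if_pos rfl, if_neg hne]
        simp
      · intro v hv hvne
        have hv2 := MvPolynomial.support_add hv
        rw [Finset.mem_union, support_monomial, support_monomial, if_neg one_ne_zero,
          if_neg one_ne_zero, Finset.mem_singleton, Finset.mem_singleton] at hv2
        rcases hv2 with rfl | rfl
        · exact drl_lemma a b hba (ind n F) (by omega)
        · exact absurd rfl hvne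
    by_cases hiG : i ∈ G
    · rw [if_pos hiG] at hGS
      by_cases hGΓ : G ∈ Γ
      · -- j ∉ G  and  G.erase i ∪ {j} ∉ Γ
        have hor : ¬(j ∈ G ∨ G.erase i ∪ {j} ∈ Γ) := fun h => hGS ⟨hGΓ, h⟩
        push_neg at hor
        obtain ⟨hjG, hUΓ⟩ := hor
        have hUn : G.erase i ∪ {j} ⊆ Finset.Icc 1 n :=
          Finset.union_subset ((Finset.erase_subset _ _).trans hGn)
            (Finset.singleton_subset_iff.mpr hjIcc)
        apply hdouble (G.erase i ∪ {j}) hUn hUΓ (by simp) 0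
        rw [add_zero]
        ext k
        simp only [Ev_apply, ind_apply]
        rcases eq_or_ne k a with rfl | hka
        · simp [hia, hij', hiG]
        rcases eq_or_ne k b with rfl | hkb
        · simp [hka, hjb, hjG]
        · have hki : (k : ℕ) + 1 ≠ i := fun h => hka (hk_a k h)
          have hkj : (k : ℕ) + 1 ≠ j := fun h => hkb (hk_b k h)
          simp [hka, hkb, hki, hkj]
      · -- G ∉ Γ
        by_cases hjG : j ∈ G
        · rcases star_lemma (K := K) n i j hi hij hj Γ hΓ hgen G hGn hiG hjG hGΓ
            with hei | hej
          · -- G.erase i ∉ Γ : two-monomial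
            apply hdouble (G.erase i) ((Finset.erase_subset _ _).trans hGn) hei
              (Finset.mem_erase.mpr ⟨Ne.symm hij', hjG⟩) (Finsupp.single b 1)
            ext k
            simp only [Finsupp.add_apply, Ev_apply, ind_apply, Finsupp.single_apply]
            rcases eq_or_ne k a with rfl | hka
            · simp [hia, hiG, Ne.symm hab]
            rcases eq_or_ne k b with rfl | hkb
            · simp [hka, hjb, hjG, Ne.symm hij']
            · have hki : (k : ℕ) + 1 ≠ i := fun h => hka (hk_a k h)
              simp [hka, hkb, Ne.symm hkb, hki]
          · -- G.erase j ∉ Γ : single-monomial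
            apply hsingle (G.erase j) ((Finset.erase_subset _ _).trans hGn) hej
              (Finset.notMem_erase j G) (Finsupp.single b 1)
            have h := ind_add_single (n := n) b G (by rw [hjb]; exact hjG)
            rw [hjb] at h
            exact h
        · -- j ∉ G : single-monomial with F = G
          apply hsingle G hGn hGΓ hjG 0
          rw [add_zero]
    · rw [if_neg hiG] at hGS
      push_neg at hGS
      obtain ⟨hGΓ, h2⟩ := hGS
      by_cases hjG : j ∈ G
      · -- the cancellation construction
        have hHΓ : insert i (G.erase j) ∉ Γ := h2 hjG
        have hHn : insert i (G.erase j) ⊆ Finset.Icc 1 n :=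
          Finset.insert_subset_iff.mpr ⟨hiIcc, (Finset.erase_subset _ _).trans hGn⟩
        have hmem : (monomial (ind n G) 1 - monomial (ind n (insert i (G.erase j))) 1 :
            MvPolynomial (Fin n) K) ∈ srIdeal K n Γ := by
          apply sub_mem
          · rw [← faceMonomial_eq]
            exact Ideal.subset_span ⟨G, hGn, hGΓ, rfl⟩
          · rw [← faceMonomial_eq]
            exact Ideal.subset_span ⟨insert i (G.erase j), hHn, hHΓ, rfl⟩
        have hmap := Ideal.mem_map_of_mem (phiC a b (1 : K)) hmem
        have hGb : ind n G b = 1 := by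
          rw [ind_apply, if_pos]
          rw [hjb]
          exact hjG
        have hHb : ind n (insert i (G.erase j)) b = 0 := by
          rw [ind_apply, if_neg]
          rw [hjb]
          simp [Finset.mem_insert, Ne.symm hij']
        rw [map_sub, phiC_two a b hab (1 : K) hGb, phiC_fix a b hab 1 (1 : K) hHb] at hmap
        have hEvH : Ev a b (ind n G) 1 = ind n (insert i (G.erase j)) := by
          ext k
          simp only [Ev_apply, ind_apply]
          rcases eq_or_ne k a with rfl | hka
          · simp [hia, hiG]
          rcases eq_or_ne k b with rfl | hkb
          · simp [hka, hjb, hjG, Ne.symm hij']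
          · have hki : (k : ℕ) + 1 ≠ i := fun h => hka (hk_a k h)
            have hkj : (k : ℕ) + 1 ≠ j := fun h => hkb (hk_b k h)
            simp [hka, hkb, hki, hkj]
        rw [hEvH, add_sub_cancel_right] at hmap
        apply hmem_init _ (ind n G) 0 hmap ?_ ?_ (add_zero _)
        · rw [coeff_monomial, if_pos rfl]
          exact one_ne_zero
        · intro v hv hvne
          rw [support_monomial, if_neg one_ne_zero, Finset.mem_singleton] at hv
          exact absurd hv hvne
      · -- j ∉ G : single-monomial with F = G
        apply hsingle G hGn hGΓ hjG 0
        rw [add_zero]
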